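/- Suppose the sequence (v^n)_{n≥0} solves the discrete wave scheme with source (r^n)_{n≥1}. Then for every n ≥ 1 the telescoped discrete energy identity holds: E^{n+1/2}(v) = E^{1/2}(v) + τ · Σ_{k=1}^{n} ⟨r^k, (v^{k+1} − v^{k−1})/(2τ)⟩. -/

import Mathlib

open RealInnerProductSpace

/-- The discrete energy `E^{n+1/2}(v)` of the leapfrog scheme. -/
noncomputable def discE {H : Type*} [NormedAddCommGroup H] [InnerProductSpace ℝ H]
    (W : Submodule ℝ H) [Submodule.HasOrthogonalProjection W]
    (a : H →ₗ[ℝ] H →ₗ[ℝ] ℝ) (τ : ℝ) (v : ℕ → H) (n : ℕ) : ℝ :=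
  (1 / 2) * ‖(Submodule.orthogonalProjectionOnto W (τ⁻¹ • (v (n + 1) - v n)) : H)‖ ^ 2
    - (τ ^ 2 / 8) * a (τ⁻¹ • (v (n + 1) - v n)) (τ⁻¹ • (v (n + 1) - v n))
    + (1 / 2) * a ((2 : ℝ)⁻¹ • (v (n + 1) + v n)) ((2 : ℝ)⁻¹ • (v (n + 1) + v n))

lemma discE_eq {H : Type*} [NormedAddCommGroup H] [InnerProductSpace ℝ H]
    (W : Submodule ℝ H) [Submodule.HasOrthogonalProjection W]
    (a : H →ₗ[ℝ] H →ₗ[ℝ] ℝ) (hsymm : ∀ u w : H, a u w = a w u)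
    (τ : ℝ) (hτ : τ ≠ 0) (v : ℕ → H) (n : ℕ) :
    discE W a τ v n
      = (2 * τ ^ 2)⁻¹ * ‖(Submodule.orthogonalProjectionOnto W (v (n + 1) - v n) : H)‖ ^ 2
        + (1 / 2) * a (v (n + 1)) (v n) := by
  unfold discE
  have hnorm : ‖(Submodule.orthogonalProjectionOnto W (τ⁻¹ • (v (n + 1) - v n)) : H)‖ ^ 2
      = (τ⁻¹) ^ 2 * ‖(Submodule.orthogonalProjectionOnto W (v (n + 1) - v n) : H)‖ ^ 2 := by
    rw [map_smul]
    push_cast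
    rw [norm_smul, Real.norm_eq_abs, mul_pow, sq_abs]
  rw [hnorm]
  simp only [map_smul, LinearMap.smul_apply, map_add, LinearMap.add_apply, map_sub,
    LinearMap.sub_apply, smul_eq_mul]
  rw [hsymm (v n) (v (n + 1))]
  field_simp
  ring

theorem telescoped_energy_identity
    {H : Type*} [NormedAddCommGroup H] [InnerProductSpace ℝ H]
    (W V : Submodule ℝ H) [Submodule.HasOrthogonalProjection W]
    (a : H →ₗ[ℝ] H →ₗ[ℝ] ℝ) (hsymm : ∀ u w : H, a u w = a w u)
    (τ : ℝ) (hτ : 0 < τ)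
    (v r : ℕ → H) (hvV : ∀ n, v n ∈ V)
    (hscheme : ∀ n, 1 ≤ n → ∀ w ∈ V,
      ⟪(Submodule.orthogonalProjectionOnto W ((τ ^ 2)⁻¹ • (v (n + 1) - 2 • v n + v (n - 1))) : H),
        (Submodule.orthogonalProjectionOnto W w : H)⟫ + a (v n) w = ⟪r n, w⟫)
    (n : ℕ) (hn : 1 ≤ n) :
    discE W a τ v n
      = discE W a τ v 0
        + τ * ∑ k ∈ Finset.Icc 1 n, ⟪r k, (2 * τ)⁻¹ • (v (k + 1) - v (k - 1))⟫ := by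
  have hτ' : τ ≠ 0 := ne_of_gt hτ
  have step : ∀ m : ℕ, discE W a τ v (m + 1)
      = discE W a τ v m + τ * ⟪r (m + 1), (2 * τ)⁻¹ • (v (m + 2) - v m)⟫ := by
    intro m
    have h := hscheme (m + 1) (Nat.le_add_left 1 m) (v (m + 2) - v m)
      (Submodule.sub_mem _ (hvV _) (hvV _))
    simp only [Nat.add_sub_cancel, show m + 1 + 1 = m + 2 from rfl] at h
    have hd : v (m + 2) - 2 • v (m + 1) + v m
        = (v (m + 2) - v (m + 1)) - (v (m + 1) - v m) := by
      rw [two_smul]; abel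
    have hs : v (m + 2) - v m = (v (m + 2) - v (m + 1)) + (v (m + 1) - v m) := by abel
    set x : H := (Submodule.orthogonalProjectionOnto W (v (m + 2) - v (m + 1)) : H) with hx
    set y : H := (Submodule.orthogonalProjectionOnto W (v (m + 1) - v m) : H) with hy
    have hinner : ⟪(Submodule.orthogonalProjectionOnto W ((τ ^ 2)⁻¹ •
          (v (m + 2) - 2 • v (m + 1) + v m)) : H),
        (Submodule.orthogonalProjectionOnto W (v (m + 2) - v m) : H)⟫
        = (τ ^ 2)⁻¹ * (‖x‖ ^ 2 - ‖y‖ ^ 2) := by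
      rw [hd, hs, map_smul, map_sub, map_add]
      push_cast [← hx, ← hy]
      rw [real_inner_smul_left, inner_sub_left, inner_add_right, inner_add_right,
        real_inner_comm y x, real_inner_self_eq_norm_sq, real_inner_self_eq_norm_sq]
      ring
    rw [hinner] at h
    have ha : a (v (m + 1)) (v (m + 2) - v m)
        = a (v (m + 2)) (v (m + 1)) - a (v (m + 1)) (v m) := by
      rw [map_sub, hsymm (v (m + 1)) (v (m + 2))]
    rw [ha] at h
    rw [discE_eq W a hsymm τ hτ' v (m + 1), discE_eq W a hsymm τ hτ' v m,
      real_inner_smul_right, ← h]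
    simp only [show m + 1 + 1 = m + 2 from rfl, ← hx, ← hy]
    field_simp
    ring
  induction n, hn using Nat.le_induction with
  | base => simpa using step 0
  | succ n hn ih =>
    rw [Finset.sum_Icc_succ_top (by omega : 1 ≤ n + 1), step n, ih]
    simp only [Nat.add_sub_cancel]
    ring
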